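/- arXiv:2309.13710 — 7 statements merged into one kernel-verified Lean document; each statement's English description precedes it below -/
import Mathlib

section
/- Let G be a group and let a, b ∈ G satisfy a^4 = 1 and b^3 = 1. Then the following four conditions are equivalent: (i) ⁅b*a*b, a^2*(b*a*b)*a^2⁆ = 1; (ii) ⁅a^2, (b*a*b)*a^2*(b*a*b)⁆ = 1; (iii) ⁅b*a*b, a^2*(b^2*a^3*b^2)*a^2⁆ = 1; (iv) ⁅b^2*a^3*b^2, a^2*(b*a*b)*a^2⁆ = 1. -/
open scoped commutatorElement
/-- The equivalent forms of the First Commutator relation of PPSL(2,ℤ):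
for a group `G` with `a^4 = 1` and `b^3 = 1`, the four commutator relations
are equivalent. -/
theorem first_commutator_equivalent_forms {G : Type*} [Group G] (a b : G)
    (ha : a ^ 4 = 1) (hb : b ^ 3 = 1) :
    List.TFAE
      [⁅b * a * b, a ^ 2 * (b * a * b) * a ^ 2⁆ = 1,
       ⁅a ^ 2, (b * a * b) * a ^ 2 * (b * a * b)⁆ = 1,
       ⁅b * a * b, a ^ 2 * (b ^ 2 * a ^ 3 * b ^ 2) * a ^ 2⁆ = 1,
       ⁅b ^ 2 * a ^ 3 * b ^ 2, a ^ 2 * (b * a * b) * a ^ 2⁆ = 1] := by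
  have hc : (a ^ 2)⁻¹ = a ^ 2 := by
    rw [inv_eq_iff_mul_eq_one, ← pow_add]; exact ha
  have hx : b ^ 2 * a ^ 3 * b ^ 2 = (b * a * b)⁻¹ := by
    have hb2 : b ^ 2 = b⁻¹ := eq_inv_of_mul_eq_one_left (by rw [← pow_succ]; exact hb)
    have ha3 : a ^ 3 = a⁻¹ := eq_inv_of_mul_eq_one_left (by rw [← pow_succ]; exact ha)
    rw [hb2, ha3]; group
  set x := b * a * b with hxdef
  set c := a ^ 2 with hcdef
  rw [hx]
  tfae_have 1 ↔ 2 := by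
    simp only [commutatorElement_eq_one_iff_commute, Commute, SemiconjBy, mul_assoc]
    exact eq_comm
  tfae_have 1 ↔ 3 := by
    rw [commutatorElement_eq_one_iff_commute, commutatorElement_eq_one_iff_commute]
    have : c * x⁻¹ * c = (c * x * c)⁻¹ := by simp only [mul_inv_rev, hc, mul_assoc]
    rw [this, Commute.inv_right_iff]
  tfae_have 1 ↔ 4 := by
    rw [commutatorElement_eq_one_iff_commute, commutatorElement_eq_one_iff_commute,
      Commute.inv_left_iff]
  tfae_finish
end

section
/- Let G be a group and let a, b ∈ G satisfy a^4 = 1 and b^3 = 1, and set v = a^2*b*a*b*a^2. Then ⁅b*a*b, a^2*b^2*a^2*(b*a*b)*a^2*b*a^2⁆ = 1 holds if and only if ⁅v, b*v*b^2⁆ = 1 holds. -/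
open scoped commutatorElement

private lemma conj_swap_iff {G : Type*} [Group G] (x c : G) :
    x * (c * x * c⁻¹) = (c * x * c⁻¹) * x ↔
      x * (c⁻¹ * x * c) = (c⁻¹ * x * c) * x := by
  constructor <;> intro h
  · have h2 := congrArg (fun t => c⁻¹ * t * c) h
    simpa [mul_assoc] using h2.symm
  · have h2 := congrArg (fun t => c * t * c⁻¹) h
    simpa [mul_assoc] using h2.symm

private lemma conj_comm_iff {G : Type*} [Group G] (g u w : G) :
    u * w = w * u ↔ (g * u * g⁻¹) * (g * w * g⁻¹) = (g * w * g⁻¹) * (g * u * g⁻¹) := by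
  constructor <;> intro h
  · simp only [mul_assoc, inv_mul_cancel_left]
    rw [← mul_assoc u w, h, mul_assoc]
  · have h2 := congrArg (fun t => g⁻¹ * t * g) h
    simpa [mul_assoc] using h2

/-- The Second Commutator relation of PPSL(2,ℤ) is equivalent to the relation (†):
`⁅v, b*v*b^2⁆ = 1` where `v = a^2*b*a*b*a^2`. -/
theorem second_commutator_iff_dagger {G : Type*} [Group G] (a b : G)
    (ha : a ^ 4 = 1) (hb : b ^ 3 = 1) :
    (⁅b * a * b, a ^ 2 * b ^ 2 * a ^ 2 * (b * a * b) * a ^ 2 * b * a ^ 2⁆ = 1)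
      ↔ (⁅a ^ 2 * b * a * b * a ^ 2,
            b * (a ^ 2 * b * a * b * a ^ 2) * b ^ 2⁆ = 1) := by
  have h4 : a ^ 2 * a ^ 2 = 1 := by rw [← pow_add]; exact ha
  have hainv : (a ^ 2)⁻¹ = a ^ 2 := inv_eq_of_mul_eq_one_right h4
  have hcinv : (a ^ 2 * b ^ 2 * a ^ 2)⁻¹ = a ^ 2 * b * a ^ 2 := by
    apply inv_eq_of_mul_eq_one_right
    calc a ^ 2 * b ^ 2 * a ^ 2 * (a ^ 2 * b * a ^ 2)
        = a ^ 2 * b ^ 2 * (a ^ 2 * a ^ 2) * b * a ^ 2 := by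
          simp [mul_assoc]
      _ = a ^ 2 * (b ^ 2 * b) * a ^ 2 := by rw [h4]; simp [mul_assoc]
      _ = a ^ 2 * a ^ 2 := by rw [show b ^ 2 * b = b ^ 3 by group, hb]; simp
      _ = 1 := h4
  rw [commutatorElement_eq_one_iff_mul_comm, commutatorElement_eq_one_iff_mul_comm]
  set x := b * a * b with hx
  set c := a ^ 2 * b ^ 2 * a ^ 2 with hc
  have hL : a ^ 2 * b ^ 2 * a ^ 2 * (b * a * b) * a ^ 2 * b * a ^ 2 = c * x * c⁻¹ := by
    rw [hcinv, hc, hx]; simp [mul_assoc]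
  have hR1 : a ^ 2 * b * a * b * a ^ 2 = (a ^ 2)⁻¹ * x * a ^ 2 := by
    rw [hainv, hx]; simp [mul_assoc]
  have key : ∀ u : G, a ^ 2 * (a ^ 2 * u * a ^ 2) * a ^ 2 = u := by
    intro u
    calc a ^ 2 * (a ^ 2 * u * a ^ 2) * a ^ 2
        = a ^ 2 * a ^ 2 * u * (a ^ 2 * a ^ 2) := by simp [mul_assoc]
      _ = u := by rw [h4]; simp
  have hR2 : b * (a ^ 2 * b * a * b * a ^ 2) * b ^ 2
      = (a ^ 2)⁻¹ * (c⁻¹ * x * c) * a ^ 2 := by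
    rw [hainv, hcinv, hc, hx]
    rw [show a ^ 2 * b * a ^ 2 * (b * a * b) * (a ^ 2 * b ^ 2 * a ^ 2)
        = a ^ 2 * (b * a ^ 2 * (b * a * b) * a ^ 2 * b ^ 2) * a ^ 2 from by
      simp [mul_assoc]]
    rw [key]
    simp [mul_assoc]
  rw [hL, hR2, hR1]
  rw [show x * (c * x * c⁻¹) = (c * x * c⁻¹) * x ↔
        x * (c⁻¹ * x * c) = (c⁻¹ * x * c) * x from conj_swap_iff x c]
  simpa using conj_comm_iff (a ^ 2)⁻¹ x (c⁻¹ * x * c)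
end

section
/- Let G be a group, let b, v ∈ G with b^3 = 1, and suppose ⁅v, b*v*b^2⁆ = 1. Then for all ε, δ ∈ {1, 2} and all σ, τ ∈ {1, -1}, we have ⁅b^ε * v^σ * b^(2ε), b^δ * v^τ * b^(2δ)⁆ = 1. -/
open scoped commutatorElement

/-- If `b^3 = 1` and `⁅v, b*v*b^2⁆ = 1`, then all the relations
`⁅b^ε v^{±1} b^{2ε}, b^δ v^{±1} b^{2δ}⁆ = 1` hold for `ε, δ ∈ {1,2}`. -/
theorem dagger_implies_all_conjugate_commutators {G : Type*} [Group G] (b v : G)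
    (hb : b ^ 3 = 1) (hdag : ⁅v, b * v * b ^ 2⁆ = 1) :
    ∀ ε ∈ ({1, 2} : Set ℕ), ∀ δ ∈ ({1, 2} : Set ℕ),
      ∀ σ ∈ ({1, -1} : Set ℤ), ∀ τ ∈ ({1, -1} : Set ℤ),
        ⁅b ^ ε * v ^ σ * b ^ (2 * ε), b ^ δ * v ^ τ * b ^ (2 * δ)⁆ = 1 := by
  have hb2 : b ^ 2 = b⁻¹ := eq_inv_of_mul_eq_one_left (by rw [← pow_succ]; exact hb)
  have hb4 : b ^ 4 = b := by
    show b ^ (3+1) = b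
    rw [pow_succ, hb, one_mul]
  set x := b * v * b⁻¹ with hx
  set y := b ^ 2 * v * (b ^ 2)⁻¹ with hy
  have hvx : Commute v x := by
    rw [hb2] at hdag
    exact commutatorElement_eq_one_iff_commute.mp hdag
  have hxy : Commute x y := by
    have h := hvx.map (MulAut.conj b)
    simpa [hx, hy, MulAut.conj_apply, mul_assoc, pow_two, mul_inv_rev] using h
  have hyv : Commute y v := by
    have h := hxy.map (MulAut.conj b)
    have e1 : (MulAut.conj b) x = y := by
      simp [hx, hy, MulAut.conj_apply, mul_assoc, pow_two, mul_inv_rev]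
    have e2 : (MulAut.conj b) y = v := by
      simp only [hy, MulAut.conj_apply, mul_assoc, mul_inv_rev]
      rw [hb2]
      group
    rw [e1, e2] at h
    exact h
  have E1 : ∀ σ : ℤ, b ^ (1:ℕ) * v ^ σ * b ^ (2*1) = x ^ σ := by
    intro σ
    rw [hx, conj_zpow]
    norm_num [hb2]
  have E2 : ∀ σ : ℤ, b ^ (2:ℕ) * v ^ σ * b ^ (2*2) = y ^ σ := by
    intro σ
    rw [hy, conj_zpow]
    have : (b ^ 2)⁻¹ = b ^ 4 := by rw [hb2, hb4, inv_inv]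
    rw [this]
  have key : ∀ (a c : G), Commute a c → ∀ σ τ : ℤ, ⁅a ^ σ, c ^ τ⁆ = 1 := by
    intro a c h σ τ
    exact commutatorElement_eq_one_iff_commute.mpr (h.zpow_zpow σ τ)
  intro ε hε δ hδ σ hσ τ hτ
  rcases hε with rfl | rfl <;> rcases hδ with rfl | rfl
  · rw [E1 σ, E1 τ]; exact key x x (Commute.refl x) σ τ
  · rw [E1 σ, E2 τ]; exact key x y hxy σ τ
  · rw [E2 σ, E1 τ]; exact key y x hxy.symm σ τ
  · rw [E2 σ, E2 τ]; exact key y y (Commute.refl y) σ τ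
end

section
/- Let G be a group and let a, b, t ∈ G satisfy the Power Law relations t^2 = 1, b^3 = 1, a^4 = 1, (t*b)^3 = 1, (t*a)^4 = 1, ⁅t, a^2⁆ = 1, ⁅t, a*t*a⁆ = 1, the Insertion relations ⁅t, b*t^ε*a*t^δ*b⁆ = 1 for all ε, δ ∈ {0,1}, and the Degeneracy relations t = ⁅a, b*t*b^2⁆ = ⁅a*t, b*t*b^2⁆ = ⁅a, t*b^2*t*b⁆ = ⁅a*t, t*b^2*t*b⁆. Then for every tuple (s₁, s₂, s₃, s₄, s₅, t₁, t₂, t₃, t₄, t₅) ∈ {0,1}^10 satisfying t₁ + t₂ ≡ s₁ + s₅, t₃ + t₄ ≡ s₂ + s₃, and t₃ + t₅ ≡ s₁ + s₄ (mod 2), the element t^{t₅} * b * t^{s₅} * a * t^{t₄} * b * t^{s₄} * b * t^{t₃} * b * t^{s₃} * a * t^{t₂} * a * t^{s₂} * a * t^{t₁} * b * t^{s₁} * b equals 1. -/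
open scoped commutatorElement

private lemma push_lift {G : Type*} [Group G] {x y z : G} (h : x * y = z * x) :
    ∀ c : G, x * (y * c) = z * (x * c) := by
  intro c; rw [← mul_assoc, h, mul_assoc]

private lemma pushn {G : Type*} [Group G] {x y z : G}
    (h : ∀ c : G, x * (y * c) = z * (x * c)) :
    ∀ (n : ℕ) (c : G), x * (y ^ n * c) = z ^ n * (x * c) := by
  intro n
  induction n with
  | zero => intro c; simp
  | succ k ih =>
    intro c
    rw [pow_succ, mul_assoc, ih (y * c), h c, ← mul_assoc, ← pow_succ]

/-- Under the Power Law, Insertion and Degeneracy relations, every t-insertion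
in the degeneracy word `(b*a*b)*(b^2*a^3*b^2)` whose exponents satisfy the
Degeneracy linear system mod 2 equals the identity. -/
theorem degeneracy_t_insertions {G : Type*} [Group G] (a b t : G)
    (ht : t ^ 2 = 1) (hb : b ^ 3 = 1) (ha : a ^ 4 = 1)
    (htb : (t * b) ^ 3 = 1) (hta : (t * a) ^ 4 = 1)
    (hta2 : ⁅t, a ^ 2⁆ = 1) (htata : ⁅t, a * t * a⁆ = 1)
    (hins : ∀ ε ∈ ({0, 1} : Set ℕ), ∀ δ ∈ ({0, 1} : Set ℕ),
      ⁅t, b * t ^ ε * a * t ^ δ * b⁆ = 1)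
    (hdeg1 : t = ⁅a, b * t * b ^ 2⁆)
    (hdeg2 : t = ⁅a * t, b * t * b ^ 2⁆)
    (hdeg3 : t = ⁅a, t * b ^ 2 * t * b⁆)
    (hdeg4 : t = ⁅a * t, t * b ^ 2 * t * b⁆) :
    ∀ s₁ ∈ ({0, 1} : Set ℕ), ∀ s₂ ∈ ({0, 1} : Set ℕ), ∀ s₃ ∈ ({0, 1} : Set ℕ),
      ∀ s₄ ∈ ({0, 1} : Set ℕ), ∀ s₅ ∈ ({0, 1} : Set ℕ),
        ∀ t₁ ∈ ({0, 1} : Set ℕ), ∀ t₂ ∈ ({0, 1} : Set ℕ), ∀ t₃ ∈ ({0, 1} : Set ℕ),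
          ∀ t₄ ∈ ({0, 1} : Set ℕ), ∀ t₅ ∈ ({0, 1} : Set ℕ),
            ((t₁ : ZMod 2) + (t₂ : ZMod 2) = (s₁ : ZMod 2) + (s₅ : ZMod 2)) →
            ((t₃ : ZMod 2) + (t₄ : ZMod 2) = (s₂ : ZMod 2) + (s₃ : ZMod 2)) →
            ((t₃ : ZMod 2) + (t₅ : ZMod 2) = (s₁ : ZMod 2) + (s₄ : ZMod 2)) →
              t ^ t₅ * b * t ^ s₅ * a * t ^ t₄ * b * t ^ s₄ * b * t ^ t₃ * b *
                t ^ s₃ * a * t ^ t₂ * a * t ^ s₂ * a * t ^ t₁ * b * t ^ s₁ * b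
                = 1 := by
  intro s₁ hs₁ s₂ hs₂ s₃ hs₃ s₄ hs₄ s₅ hs₅ t₁ ht₁ t₂ ht₂ t₃ ht₃ t₄ ht₄ t₅ ht₅ hp1 hp2 hp3
  clear hs₁ hs₂ hs₃ hs₄ hs₅ ht₁ ht₂ ht₃ ht₄ ht₅ hdeg3 hdeg4 hta
  -- basic cancellation lemmas
  have ht1 : t * t = 1 := by rw [← pow_two]; exact ht
  have htc : ∀ c : G, t * (t * c) = c := fun c => by rw [← mul_assoc, ht1, one_mul]
  have hb1 : b * (b * b) = 1 := by simpa [pow_succ, pow_two, mul_assoc] using hb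
  have hbc : ∀ c : G, b * (b * (b * c)) = c := fun c => by
    rw [← mul_assoc, ← mul_assoc, show b * b * b = 1 by simpa [mul_assoc] using hb1, one_mul]
  have haa : a * (a * (a * a)) = 1 := by simpa [pow_succ, pow_two, mul_assoc] using ha
  have hac : ∀ c : G, a * (a * (a * (a * c))) = c := fun c => by
    rw [← mul_assoc, ← mul_assoc, ← mul_assoc,
      show a * a * a * a = 1 by simpa [mul_assoc] using haa, one_mul]
  -- (t*b)^3 = 1 expanded
  have htb3 : t * (b * (t * (b * (t * b)))) = 1 := by
    simpa [pow_succ, pow_two, mul_assoc] using htb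
  have htbc : ∀ c : G, t * (b * (t * (b * (t * (b * c))))) = c := by
    intro c
    have h := congrArg (· * c) htb3
    simpa [mul_assoc] using h
  have hB : ∀ d : G, t * (b * (t * (b * d))) = b * (b * (t * d)) := by
    intro d
    have h := htbc (b * (b * (t * d)))
    rwa [hbc, htc] at h
  -- the three auxiliary elements
  obtain ⟨u, hu⟩ : ∃ x : G, x = b * (t * (b * b)) := ⟨_, rfl⟩
  obtain ⟨s, hs⟩ : ∃ x : G, x = a * (t * (a * (a * a))) := ⟨_, rfl⟩
  obtain ⟨sb, hsb⟩ : ∃ x : G, x = b * (s * (b * b)) := ⟨_, rfl⟩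
  have hu_w : b * t * b ^ 2 = u := by rw [hu]; simp only [pow_two, mul_assoc]
  -- single-step push lemmas
  have hbt : b * t = u * b := by
    rw [hu]; simp only [mul_assoc]; rw [hb1, mul_one]
  have B1 : ∀ c : G, b * (t * c) = u * (b * c) := push_lift hbt
  have hat : a * t = s * a := by
    rw [hs]; simp only [mul_assoc]; rw [haa, mul_one]
  have B2 : ∀ c : G, a * (t * c) = s * (a * c) := push_lift hat
  have hbs : b * s = sb * b := by
    rw [hsb]; simp only [mul_assoc]; rw [hb1, mul_one]
  have B3 : ∀ c : G, b * (s * c) = sb * (b * c) := push_lift hbs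
  have B4' : ∀ c : G, b * (u * c) = (t * u) * (b * c) := by
    intro c
    rw [hu]; simp only [mul_assoc]
    exact (hB (b * (b * c))).symm
  have B4 : ∀ c : G, b * (u * c) = t * (u * (b * c)) := fun c =>
    (B4' c).trans (mul_assoc t u (b * c))
  -- commutation of t with a^2 and a*t*a
  have hc2 : ∀ c : G, t * (a * (a * c)) = a * (a * (t * c)) := by
    have h : t * (a * a) = a * (a * t) := by
      have := commutatorElement_eq_one_iff_mul_comm.mp hta2
      simpa [pow_two, mul_assoc] using this
    intro c
    have h2 := congrArg (· * c) h
    simpa [mul_assoc] using h2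
  have hc1 : ∀ c : G, t * (a * (t * (a * c))) = a * (t * (a * (t * c))) := by
    have h : t * (a * t * a) = a * t * a * t := commutatorElement_eq_one_iff_mul_comm.mp htata
    intro c
    have h2 := congrArg (· * c) h
    simpa [mul_assoc] using h2
  -- t commutes with s
  have hts : ∀ c : G, t * (s * c) = s * (t * c) := by
    intro c
    rw [hs]; simp only [mul_assoc]
    rw [hc1 (a * (a * c)), hc2 c]
  have B6 : ∀ c : G, a * (s * c) = t * (a * c) := by
    intro c
    rw [hs]; simp only [mul_assoc]
    rw [← hc2 (a * (a * (a * c))), hac (a * c)]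
  -- degeneracy relations give a-conjugation of u and [t,u]=1
  have hw := hdeg1.symm.trans hdeg2
  rw [hu_w, commutatorElement_def, commutatorElement_def] at hw
  have hw2 := mul_right_cancel hw
  rw [mul_inv_rev, ← mul_assoc] at hw2
  have hw2' := mul_right_cancel hw2
  rw [mul_assoc, mul_assoc] at hw2'
  have hw3 : u = t * (u * t⁻¹) := mul_left_cancel hw2'
  have hut : t * u = u * t := by
    conv_rhs => rw [hw3]
    group
  have Ctu : ∀ c : G, t * (u * c) = u * (t * c) := push_lift hut
  have hd1 : t = a * u * a⁻¹ * u⁻¹ := by rw [hdeg1, hu_w, commutatorElement_def]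
  have hau : a * u = t * u * a := by rw [hd1]; group
  have B5' : ∀ c : G, a * (u * c) = (t * u) * (a * c) := push_lift hau
  have B5 : ∀ c : G, a * (u * c) = t * (u * (a * c)) := fun c =>
    (B5' c).trans (mul_assoc t u (a * c))
  have huu : ∀ c : G, u * (u * c) = c := by
    intro c
    rw [hu]; simp only [mul_assoc]
    rw [hbc, htc, hbc]
  -- composite push lemmas
  have B7 : ∀ c : G, b * (t * (u * c)) = t * (b * c) := by
    intro c
    rw [B1 (u * c), B4 c, ← mul_assoc, ← hut, mul_assoc, huu (b * c)]
  have B7' : ∀ c : G, b * ((t * u) * c) = t * (b * c) := fun c => by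
    rw [mul_assoc]; exact B7 c
  have B8 : ∀ c : G, a * (t * (u * c)) = s * (t * (u * (a * c))) := by
    intro c
    rw [B2 (u * c), B5 c]
  have B8' : ∀ c : G, a * ((t * u) * c) = (s * (t * u)) * (a * c) := fun c => by
    simp only [mul_assoc]; exact B8 c
  have B9 : ∀ c : G, b * (s * (t * (u * c))) = sb * (t * (b * c)) := by
    intro c
    rw [B3 (t * (u * c)), B7 c]
  have B9' : ∀ c : G, b * ((s * (t * u)) * c) = (sb * t) * (b * c) := fun c => by
    simp only [mul_assoc]; exact B9 c
  have B10 : ∀ c : G, a * (s * (t * (u * c))) = s * (u * (a * c)) := by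
    intro c
    rw [B6 (t * (u * c)), B8 c, hts (t * (u * (a * c))), htc (u * (a * c))]
  have B10' : ∀ c : G, a * ((s * (t * u)) * c) = (s * u) * (a * c) := fun c => by
    simp only [mul_assoc]; exact B10 c
  have B11 : ∀ c : G, a * (s * (u * c)) = u * (a * c) := by
    intro c
    rw [B6 (u * c), B5 c, htc (u * (a * c))]
  have B11' : ∀ c : G, a * ((s * u) * c) = u * (a * c) := fun c => by
    simp only [mul_assoc]; exact B11 c
  -- t commutes with sb (from the insertion relations)
  have hainv : a⁻¹ = a * (a * a) := inv_eq_of_mul_eq_one_right haa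
  have hbinv : b⁻¹ = b * b := inv_eq_of_mul_eq_one_right hb1
  have c2 : Commute t (b * a * b) := by
    have h := hins 0 (by simp) 0 (by simp)
    simp only [pow_zero, mul_one, one_mul] at h
    exact commutatorElement_eq_one_iff_mul_comm.mp h
  have c1 : Commute t (b * a * t * b) := by
    have h := hins 0 (by simp) 1 (by simp)
    simp only [pow_zero, pow_one, mul_one, one_mul] at h
    exact commutatorElement_eq_one_iff_mul_comm.mp h
  have hsb_eq : sb = b * a * t * b * (b * a * b)⁻¹ := by
    rw [hsb, hs]
    simp only [mul_inv_rev, hbinv, hainv, mul_assoc]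
    rw [hbc]
  have Ctsb : Commute t sb := by
    rw [hsb_eq]; exact c1.mul_right c2.inv_right
  have Ctsbc : ∀ c : G, t * (sb * c) = sb * (t * c) := push_lift Ctsb.eq
  -- u commutes with sb
  have husb : u * sb = sb * u := by
    rw [hu, hsb]; simp only [mul_assoc]
    rw [hbc, hbc, hts (b * b)]
  have Cusb : Commute u sb := husb
  have Ctu' : Commute t u := hut
  -- involution facts
  have huu1 : u * u = 1 := by have h := huu 1; rwa [mul_one] at h
  have hss : ∀ c : G, s * (s * c) = c := by
    intro c
    rw [hs]; simp only [mul_assoc]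
    rw [hac, htc, hac]
  have hsbsb : sb * sb = 1 := by
    rw [hsb]; simp only [mul_assoc]
    rw [hbc, hss (b * b), hb1]
  -- power push lemmas
  have P_bt := pushn B1
  have P_at := pushn B2
  have P_bs := pushn B3
  have P_bu := pushn B4'
  have P_au := pushn B5'
  have P_as := pushn B6
  have P_btu := pushn B7'
  have P_atu := pushn B8'
  have P_bstu := pushn B9'
  have P_astu := pushn B10'
  have P_asu := pushn B11'
  -- push all t-powers to the front of the word
  simp only [mul_assoc]
  rw [P_bt]
  rw [P_at]
  rw [P_bs]
  rw [P_bt]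
  rw [P_au]
  rw [P_btu]
  rw [P_bt]
  rw [P_bu]
  rw [P_atu]
  rw [P_bstu]
  rw [hbc]
  rw [P_at]
  rw [P_bs]
  rw [P_at]
  rw [P_as]
  rw [P_bt]
  rw [P_at]
  rw [P_as]
  rw [P_at]
  rw [P_bs]
  rw [P_at]
  rw [P_as]
  rw [P_at]
  rw [P_as]
  rw [P_bt]
  rw [P_bt]
  rw [P_au]
  rw [P_atu]
  rw [P_astu]
  rw [P_asu]
  rw [P_bu]
  rw [hac]
  rw [hb1]
  rw [mul_one]
  rw [Ctsb.symm.mul_pow, Ctu'.mul_pow]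
  -- sort the commuting powers
  have S1 : ∀ (m n : ℕ) (c : G), u ^ m * (t ^ n * c) = t ^ n * (u ^ m * c) := fun m n c => by
    rw [← mul_assoc, (Ctu'.symm.pow_pow m n).eq, mul_assoc]
  have S1' : ∀ m n : ℕ, u ^ m * t ^ n = t ^ n * u ^ m := fun m n =>
    (Ctu'.symm.pow_pow m n).eq
  have S2 : ∀ (m n : ℕ) (c : G), sb ^ m * (t ^ n * c) = t ^ n * (sb ^ m * c) := fun m n c => by
    rw [← mul_assoc, (Ctsb.symm.pow_pow m n).eq, mul_assoc]
  have S2' : ∀ m n : ℕ, sb ^ m * t ^ n = t ^ n * sb ^ m := fun m n =>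
    (Ctsb.symm.pow_pow m n).eq
  have S3 : ∀ (m n : ℕ) (c : G), sb ^ m * (u ^ n * c) = u ^ n * (sb ^ m * c) := fun m n c => by
    rw [← mul_assoc, (Cusb.symm.pow_pow m n).eq, mul_assoc]
  have S3' : ∀ m n : ℕ, sb ^ m * u ^ n = u ^ n * sb ^ m := fun m n =>
    (Cusb.symm.pow_pow m n).eq
  simp only [mul_assoc, S1, S1', S2, S2', S3, S3']
  have Mt : ∀ (m n : ℕ) (c : G), t ^ m * (t ^ n * c) = t ^ (m + n) * c := fun m n c => by
    rw [← mul_assoc, ← pow_add]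
  have Mu : ∀ (m n : ℕ) (c : G), u ^ m * (u ^ n * c) = u ^ (m + n) * c := fun m n c => by
    rw [← mul_assoc, ← pow_add]
  have Msb : ∀ (m n : ℕ) (c : G), sb ^ m * (sb ^ n * c) = sb ^ (m + n) * c := fun m n c => by
    rw [← mul_assoc, ← pow_add]
  rw [Mt, Mt, Mt, Mu, Mu, Mu, Msb, Msb, ← pow_add]
  -- parity conditions give even exponents
  have m1 : (t₁ + t₂) % 2 = (s₁ + s₅) % 2 :=
    (ZMod.natCast_eq_natCast_iff _ _ _).mp (by push_cast; exact hp1)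
  have m2 : (t₃ + t₄) % 2 = (s₂ + s₃) % 2 :=
    (ZMod.natCast_eq_natCast_iff _ _ _).mp (by push_cast; exact hp2)
  have m3 : (t₃ + t₅) % 2 = (s₁ + s₄) % 2 :=
    (ZMod.natCast_eq_natCast_iff _ _ _).mp (by push_cast; exact hp3)
  have hu2 : u ^ 2 = 1 := by rw [pow_two]; exact huu1
  have hsb2 : sb ^ 2 = 1 := by rw [pow_two]; exact hsbsb
  have e1 : t ^ (t₅ + s₄ + t₃ + s₁) = 1 := by
    obtain ⟨k, hk⟩ : ∃ k, t₅ + s₄ + t₃ + s₁ = 2 * k := ⟨(t₅ + s₄ + t₃ + s₁) / 2, by omega⟩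
    rw [hk, pow_mul, ht, one_pow]
  have e2 : u ^ (s₅ + t₂ + t₁ + s₁) = 1 := by
    obtain ⟨k, hk⟩ : ∃ k, s₅ + t₂ + t₁ + s₁ = 2 * k := ⟨(s₅ + t₂ + t₁ + s₁) / 2, by omega⟩
    rw [hk, pow_mul, hu2, one_pow]
  have e3 : sb ^ (t₄ + t₃ + s₃ + s₂) = 1 := by
    obtain ⟨k, hk⟩ : ∃ k, t₄ + t₃ + s₃ + s₂ = 2 * k := ⟨(t₄ + t₃ + s₃ + s₂) / 2, by omega⟩
    rw [hk, pow_mul, hsb2, one_pow]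
  rw [e1, e2, e3, one_mul, one_mul]
end

section
/- Let G be a group generated by three elements a, b, t satisfying t^2 = 1, b^3 = 1, a^4 = 1, (t*b)^3 = 1, (a*b)^5 = 1, and t = ⁅a, b*t*b^2⁆. Then G is perfect, i.e., the commutator subgroup of G is all of G. -/
open scoped commutatorElement

/-- A group generated by `a`, `b`, `t` satisfying `t^2 = b^3 = a^4 = (t*b)^3
= (a*b)^5 = 1` and `t = ⁅a, b*t*b^2⁆` is perfect. -/
theorem generated_group_is_perfect {G : Type*} [Group G] (a b t : G)
    (hgen : Subgroup.closure ({a, b, t} : Set G) = ⊤)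
    (ht : t ^ 2 = 1) (hb : b ^ 3 = 1) (ha : a ^ 4 = 1)
    (htb : (t * b) ^ 3 = 1) (hab : (a * b) ^ 5 = 1)
    (hdeg : t = ⁅a, b * t * b ^ 2⁆) :
    commutator G = ⊤ := by
  set f := Abelianization.of (G := G) with hf
  have hker : MonoidHom.ker f = commutator G := by
    ext x
    exact QuotientGroup.eq_one_iff x
  -- image of t is trivial
  have hft : f t = 1 := by
    have h1 := congrArg f hdeg
    rw [map_commutatorElement] at h1
    rw [h1]
    exact commutatorElement_eq_one_iff_commute.mpr (mul_comm _ _)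
  have hfb3 : (f b) ^ 3 = 1 := by rw [← map_pow, hb, map_one]
  have hfa4 : (f a) ^ 4 = 1 := by rw [← map_pow, ha, map_one]
  have hfab : (f a * f b) ^ 5 = 1 := by rw [← map_mul, ← map_pow, hab, map_one]
  rw [mul_pow] at hfab
  have h5 : (f a) ^ 5 = f a := by
    rw [show (5:ℕ) = 4 + 1 by rfl, pow_succ, hfa4, one_mul]
  have h5b : (f b) ^ 5 = (f b) ^ 2 := by
    rw [show (5:ℕ) = 3 + 2 by rfl, pow_add, hfb3, one_mul]
  rw [h5, h5b] at hfab
  -- f a = f b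
  have hab2 : f a = (f b)⁻¹ ^ 2 := by
    rw [inv_pow]
    exact eq_inv_of_mul_eq_one_left hfab
  have hfa3 : (f a) ^ 3 = 1 := by
    rw [hab2, ← pow_mul, inv_pow, inv_eq_one, show 2*3 = 3*2 by rfl, pow_mul, hfb3, one_pow]
  have hfa : f a = 1 := by
    have : (f a) ^ 4 = (f a) ^ 3 * f a := by rw [pow_succ]
    rw [hfa4, hfa3, one_mul] at this
    exact this.symm
  have hfb : f b = 1 := by
    have h1 : (1:Abelianization G) = (f b)⁻¹ ^ 2 := hfa ▸ hab2
    have h2 : (f b) ^ 2 = 1 := by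
      rw [← inv_inv ((f b)^2), ← inv_pow, ← h1, inv_one]
    calc f b = (f b)^3 * ((f b)^2)⁻¹ := by group
    _ = 1 := by rw [hfb3, h2]; group
  have hsub : Subgroup.closure ({a, b, t} : Set G) ≤ MonoidHom.ker f := by
    rw [Subgroup.closure_le]
    intro x hx
    rcases hx with rfl | rfl | rfl <;> simp [MonoidHom.mem_ker, hfa, hfb, hft]
  rw [hgen, hker] at hsub
  exact top_le_iff.mp hsub
end

section
/- Let G be a group and let a, b ∈ G satisfy a^4 = 1 and b^3 = 1. Then ⁅b*a*b, a^2*(b*a*b)*a^2⁆ = 1 holds if and only if for all ε₁, ε₂ ∈ {1, 2}, setting g = b^{ε₂} * a^2 * b^{ε₁} and c = g⁻¹ * b^{2ε₂} * a^{2ε₂ − 1} * g, one has a^{2ε₁ + 1} * c * a^{2ε₁ − 1} = b^{2ε₁} * c * b^{ε₁}. -/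
open scoped commutatorElement

/-- The First Commutator relation is equivalent to the functional equation
FE(g) for all length-two normal-form words `g = b^{ε₂} a² b^{ε₁}` with
`ε₁, ε₂ ∈ {1,2}`. -/
theorem first_commutator_iff_FE_length_two {G : Type*} [Group G] (a b : G)
    (ha : a ^ 4 = 1) (hb : b ^ 3 = 1) :
    (⁅b * a * b, a ^ 2 * (b * a * b) * a ^ 2⁆ = 1) ↔
      (∀ ε₁ ∈ ({1, 2} : Set ℕ), ∀ ε₂ ∈ ({1, 2} : Set ℕ),
        ∀ g c : G, g = b ^ ε₂ * a ^ 2 * b ^ ε₁ →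
          c = g⁻¹ * b ^ (2 * ε₂) * a ^ (2 * ε₂ - 1) * g →
            a ^ (2 * ε₁ + 1) * c * a ^ (2 * ε₁ - 1)
              = b ^ (2 * ε₁) * c * b ^ ε₁) := by
  have pa2 : a ^ (2:ℕ) = a * a := by
    rw [pow_two]
  have pa3 : a ^ (3:ℕ) = a * (a * a) := by
    rw [show (3:ℕ) = 2 + 1 from rfl, pow_succ, pow_two, mul_assoc]
  have pa4 : a ^ (4:ℕ) = a * (a * (a * a)) := by
    rw [show (4:ℕ) = 3 + 1 from rfl, pow_succ, pa3, mul_assoc, mul_assoc]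
  have pa5 : a ^ (5:ℕ) = a * (a * (a * (a * a))) := by
    rw [show (5:ℕ) = 4 + 1 from rfl, pow_succ, pa4, mul_assoc, mul_assoc, mul_assoc]
  have pb2 : b ^ (2:ℕ) = b * b := by
    rw [pow_two]
  have pb3 : b ^ (3:ℕ) = b * (b * b) := by
    rw [show (3:ℕ) = 2 + 1 from rfl, pow_succ, pow_two, mul_assoc]
  have pb4 : b ^ (4:ℕ) = b * (b * (b * b)) := by
    rw [show (4:ℕ) = 3 + 1 from rfl, pow_succ, pb3, mul_assoc, mul_assoc]
  have ha0 : a * (a * (a * a)) = 1 := by rw [← pa4]; exact ha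
  have hb0 : b * (b * b) = 1 := by rw [← pb3]; exact hb
  have ha1 : ∀ x : G, a * (a * (a * (a * x))) = x := fun x => by
    calc a * (a * (a * (a * x))) = a * (a * (a * a)) * x := by simp only [mul_assoc]
    _ = x := by rw [ha0, one_mul]
  have hb1 : ∀ x : G, b * (b * (b * x)) = x := fun x => by
    calc b * (b * (b * x)) = b * (b * b) * x := by simp only [mul_assoc]
    _ = x := by rw [hb0, one_mul]
  have hai : a⁻¹ = a * (a * a) := inv_eq_of_mul_eq_one_right ha0
  have hbi : b⁻¹ = b * b := inv_eq_of_mul_eq_one_right hb0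
  rw [commutatorElement_eq_one_iff_mul_comm]
  constructor
  · intro hK
    have keyN : b * (a * (b * (a * (a * (b * (a * (b * (a * a))))))))
        = a * (a * (b * (a * (b * (a * (a * (b * (a * b)))))))) := by
      have h := hK
      simp only [pa2, pa3, pa5, pb2, pb4, pow_one, mul_inv_rev, hai, hbi, mul_assoc,
        ha1, ha0, hb1, hb0, one_mul, mul_one] at h
      exact h
    intro ε₁ h1 ε₂ h2 g c hg hc
    simp only [Set.mem_insert_iff, Set.mem_singleton_iff] at h1 h2
    subst hg hc
    rcases h1 with rfl | rfl <;> rcases h2 with rfl | rfl <;> norm_num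
    · -- ε₁ = 1, ε₂ = 1 : u⁻¹ = b*a, v = b
      apply mul_right_cancel (b := b)
      apply mul_left_cancel (a := b * a)
      simp only [pa2, pa3, pa5, pb2, pb4, pow_one, mul_inv_rev, hai, hbi, mul_assoc,
        ha1, ha0, hb1, hb0, one_mul, mul_one]
      exact keyN.symm
    · -- ε₁ = 1, ε₂ = 2
      apply mul_right_cancel (b := b * (a * (a * (b * (a * b)))))
      apply mul_left_cancel (a := b * (a * (b * (a * (a * (b * a))))))
      simp only [pa2, pa3, pa5, pb2, pb4, pow_one, mul_inv_rev, hai, hbi, mul_assoc,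
        ha1, ha0, hb1, hb0, one_mul, mul_one]
      exact keyN.symm
    · -- ε₁ = 2, ε₂ = 1
      apply mul_right_cancel (b := a * b)
      apply mul_left_cancel (a := b)
      simp only [pa2, pa3, pa5, pb2, pb4, pow_one, mul_inv_rev, hai, hbi, mul_assoc,
        ha1, ha0, hb1, hb0, one_mul, mul_one]
      exact keyN
    · -- ε₁ = 2, ε₂ = 2
      apply mul_right_cancel (b := a * (b * (a * (a * (b * (a * b))))))
      apply mul_left_cancel (a := b * (a * (b * (a * (a * b)))))
      simp only [pa2, pa3, pa5, pb2, pb4, pow_one, mul_inv_rev, hai, hbi, mul_assoc,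
        ha1, ha0, hb1, hb0, one_mul, mul_one]
      exact keyN
  · intro hFE
    have h := hFE 2 (by simp) 1 (by simp)
      (b ^ (1:ℕ) * a ^ 2 * b ^ 2) _ rfl rfl
    norm_num at h
    have h2 := congrArg (fun x : G => b * x * (a * b)) h
    simp only [pa2, pa3, pa5, pb2, pb4, pow_one, mul_inv_rev, hai, hbi, mul_assoc,
      ha1, ha0, hb1, hb0, one_mul, mul_one] at h2 ⊢
    exact h2
end

section
/- Let G be a group and let a, b ∈ G satisfy a^4 = 1, b^3 = 1, and ⁅b*a*b, a^2*(b*a*b)*a^2⁆ = 1, and set v = a^2*b*a*b*a^2. Then ⁅v, b*v*b^2⁆ = 1 holds if and only if for all ε₁, ε₂, ε₃ ∈ {1, 2}, setting g = b^{ε₃} * a^2 * b^{ε₂} * a^2 * b^{ε₁} and c = g⁻¹ * b^{2ε₃} * a^{2ε₃ − 1} * g, one has a^{2ε₁ + 1} * c * a^{2ε₁ − 1} = b^{2ε₁} * c * b^{ε₁}. -/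
open scoped commutatorElement

set_option maxHeartbeats 2000000 in
/-- Given the First Commutator relation, the relation (†) `⁅v, b*v*b^2⁆ = 1`
with `v = a^2*b*a*b*a^2` is equivalent to the functional equation FE(g) for
all length-three normal-form words `g = b^{ε₃} a² b^{ε₂} a² b^{ε₁}` with
`ε₁, ε₂, ε₃ ∈ {1,2}`. -/
theorem dagger_iff_FE_length_three {G : Type*} [Group G] (a b : G)
    (ha : a ^ 4 = 1) (hb : b ^ 3 = 1)
    (hc1 : ⁅b * a * b, a ^ 2 * (b * a * b) * a ^ 2⁆ = 1) :
    (⁅a ^ 2 * b * a * b * a ^ 2,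
        b * (a ^ 2 * b * a * b * a ^ 2) * b ^ 2⁆ = 1) ↔
      (∀ ε₁ ∈ ({1, 2} : Set ℕ), ∀ ε₂ ∈ ({1, 2} : Set ℕ), ∀ ε₃ ∈ ({1, 2} : Set ℕ),
        ∀ g c : G, g = b ^ ε₃ * a ^ 2 * b ^ ε₂ * a ^ 2 * b ^ ε₁ →
          c = g⁻¹ * b ^ (2 * ε₃) * a ^ (2 * ε₃ - 1) * g →
            a ^ (2 * ε₁ + 1) * c * a ^ (2 * ε₁ - 1)
              = b ^ (2 * ε₁) * c * b ^ ε₁) := by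
  clear hc1
  have ha4x : ∀ x : G, a*(a*(a*(a*x))) = x := fun x => by
    rw [show a*(a*(a*(a*x))) = a^4*x by simp [pow_succ, mul_assoc], ha, one_mul]
  have hb3x : ∀ x : G, b*(b*(b*x)) = x := fun x => by
    rw [show b*(b*(b*x)) = b^3*x by simp [pow_succ, mul_assoc], hb, one_mul]
  have ha1 : a*(a*(a*a)) = 1 := by rw [← ha]; simp [pow_succ, mul_assoc]
  have hb1 : b*(b*b) = 1 := by rw [← hb]; simp [pow_succ, mul_assoc]
  have hainv : a⁻¹ = a*(a*a) := by
    rw [show a*(a*a) = a^4*a⁻¹ by simp [pow_succ, mul_assoc], ha, one_mul]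
  have hbinv : b⁻¹ = b*b := by
    rw [show b*b = b^3*b⁻¹ by simp [pow_succ, mul_assoc], hb, one_mul]
  have pa2 : (a:G)^2 = a*a := by simp [pow_succ]
  have pa3 : (a:G)^3 = a*(a*a) := by simp [pow_succ, mul_assoc]
  have pa5 : (a:G)^5 = a*(a*(a*(a*a))) := by simp [pow_succ, mul_assoc]
  have pb2 : (b:G)^2 = b*b := by simp [pow_succ]
  have pb4 : (b:G)^4 = b*(b*(b*b)) := by simp [pow_succ, mul_assoc]
  constructor
  · intro hd
    have hdC : Commute (a^2*b*a*b*a^2) (b*(a^2*b*a*b*a^2)*b^2) := by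
      rw [← commutatorElement_eq_one_iff_commute]
      simpa using hd
    have hde : (a^2*b*a*b*a^2) * (b*(a^2*b*a*b*a^2)*b^2) = (b*(a^2*b*a*b*a^2)*b^2) * (a^2*b*a*b*a^2) := hdC.eq
    have hdie : (a^2*b*a*b*a^2)⁻¹ * (b*(a^2*b*a*b*a^2)*b^2) = (b*(a^2*b*a*b*a^2)*b^2) * (a^2*b*a*b*a^2)⁻¹ := hdC.inv_left.eq
    have hd2e : (a^2*b*a*b*a^2) * (b^2*(a^2*b*a*b*a^2)*b) = (b^2*(a^2*b*a*b*a^2)*b) * (a^2*b*a*b*a^2) := by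
      have h5 : b^2 * ((a^2*b*a*b*a^2) * (b*(a^2*b*a*b*a^2)*b^2)) * b = b^2 * ((b*(a^2*b*a*b*a^2)*b^2) * (a^2*b*a*b*a^2)) * b := by
        rw [hde]
      simp only [Nat.reduceMul, Nat.reduceAdd, Nat.reduceSub, pa2, pa3, pa5, pb2, pb4, pow_one, mul_inv_rev, inv_inv, hainv, hbinv, mul_assoc, one_mul, mul_one, ha4x, hb3x, ha1, hb1] at h5 ⊢
      exact h5.symm
    have hd2ie : (a^2*b*a*b*a^2)⁻¹ * (b^2*(a^2*b*a*b*a^2)*b) = (b^2*(a^2*b*a*b*a^2)*b) * (a^2*b*a*b*a^2)⁻¹ := by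
      have hdC2 : Commute (a^2*b*a*b*a^2) (b^2*(a^2*b*a*b*a^2)*b) := hd2e
      exact hdC2.inv_left.eq
    intro ε₁ hε₁ ε₂ hε₂ ε₃ hε₃ g c hg hc
    subst hc
    subst hg
    simp only [Set.mem_insert_iff, Set.mem_singleton_iff] at hε₁ hε₂ hε₃
    rcases hε₁ with rfl | rfl
    · rcases hε₂ with rfl | rfl
      · rcases hε₃ with rfl | rfl
        · have key : (b*(a^2*b^2*a^3*b^2*a^2)*b^2) * ((a^2*b*a*b*a^2) * (b*(a^2*b*a*b*a^2)*b^2)) = (a^2*b*a*b*a^2) := by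
            have h5 : (b*(a^2*b*a*b*a^2)*b^2)⁻¹ * ((a^2*b*a*b*a^2) * (b*(a^2*b*a*b*a^2)*b^2)) = (b*(a^2*b*a*b*a^2)*b^2)⁻¹ * ((b*(a^2*b*a*b*a^2)*b^2) * (a^2*b*a*b*a^2)) := by rw [hde]
            simp only [Nat.reduceMul, Nat.reduceAdd, Nat.reduceSub, pa2, pa3, pa5, pb2, pb4, pow_one, mul_inv_rev, inv_inv, hainv, hbinv, mul_assoc, one_mul, mul_one, ha4x, hb3x, ha1, hb1] at h5 ⊢
            exact h5
          have h6 : (b*a^2*b^2) * ((b*(a^2*b^2*a^3*b^2*a^2)*b^2) * ((a^2*b*a*b*a^2) * (b*(a^2*b*a*b*a^2)*b^2))) * (b*a^2*b^2)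
              = (b*a^2*b^2) * (a^2*b*a*b*a^2) * (b*a^2*b^2) := by rw [key]
          simp only [Nat.reduceMul, Nat.reduceAdd, Nat.reduceSub, pa2, pa3, pa5, pb2, pb4, pow_one, mul_inv_rev, inv_inv, hainv, hbinv, mul_assoc, one_mul, mul_one, ha4x, hb3x, ha1, hb1] at h6 ⊢
          exact h6
        · have key : (b*(a^2*b^2*a^3*b^2*a^2)*b^2) * ((a^2*b^2*a^3*b^2*a^2) * (b*(a^2*b*a*b*a^2)*b^2)) = (a^2*b^2*a^3*b^2*a^2) := by
            have h5 : (b*(a^2*b*a*b*a^2)*b^2)⁻¹ * ((a^2*b*a*b*a^2)⁻¹ * (b*(a^2*b*a*b*a^2)*b^2)) = (b*(a^2*b*a*b*a^2)*b^2)⁻¹ * ((b*(a^2*b*a*b*a^2)*b^2) * (a^2*b*a*b*a^2)⁻¹) := by rw [hdie]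
            simp only [Nat.reduceMul, Nat.reduceAdd, Nat.reduceSub, pa2, pa3, pa5, pb2, pb4, pow_one, mul_inv_rev, inv_inv, hainv, hbinv, mul_assoc, one_mul, mul_one, ha4x, hb3x, ha1, hb1] at h5 ⊢
            exact h5
          have h6 : (b*a^2*b^2) * ((b*(a^2*b^2*a^3*b^2*a^2)*b^2) * ((a^2*b^2*a^3*b^2*a^2) * (b*(a^2*b*a*b*a^2)*b^2))) * (b*a^2*b^2)
              = (b*a^2*b^2) * (a^2*b^2*a^3*b^2*a^2) * (b*a^2*b^2) := by rw [key]
          simp only [Nat.reduceMul, Nat.reduceAdd, Nat.reduceSub, pa2, pa3, pa5, pb2, pb4, pow_one, mul_inv_rev, inv_inv, hainv, hbinv, mul_assoc, one_mul, mul_one, ha4x, hb3x, ha1, hb1] at h6 ⊢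
          exact h6
      · rcases hε₃ with rfl | rfl
        · have key : (b^2*(a^2*b^2*a^3*b^2*a^2)*b) * ((a^2*b*a*b*a^2) * (b^2*(a^2*b*a*b*a^2)*b)) = (a^2*b*a*b*a^2) := by
            have h5 : (b^2*(a^2*b*a*b*a^2)*b)⁻¹ * ((a^2*b*a*b*a^2) * (b^2*(a^2*b*a*b*a^2)*b)) = (b^2*(a^2*b*a*b*a^2)*b)⁻¹ * ((b^2*(a^2*b*a*b*a^2)*b) * (a^2*b*a*b*a^2)) := by rw [hd2e]
            simp only [Nat.reduceMul, Nat.reduceAdd, Nat.reduceSub, pa2, pa3, pa5, pb2, pb4, pow_one, mul_inv_rev, inv_inv, hainv, hbinv, mul_assoc, one_mul, mul_one, ha4x, hb3x, ha1, hb1] at h5 ⊢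
            exact h5
          have h6 : (b*a^2*b) * ((b^2*(a^2*b^2*a^3*b^2*a^2)*b) * ((a^2*b*a*b*a^2) * (b^2*(a^2*b*a*b*a^2)*b))) * (b^2*a^2*b^2)
              = (b*a^2*b) * (a^2*b*a*b*a^2) * (b^2*a^2*b^2) := by rw [key]
          simp only [Nat.reduceMul, Nat.reduceAdd, Nat.reduceSub, pa2, pa3, pa5, pb2, pb4, pow_one, mul_inv_rev, inv_inv, hainv, hbinv, mul_assoc, one_mul, mul_one, ha4x, hb3x, ha1, hb1] at h6 ⊢
          exact h6
        · have key : (b^2*(a^2*b^2*a^3*b^2*a^2)*b) * ((a^2*b^2*a^3*b^2*a^2) * (b^2*(a^2*b*a*b*a^2)*b)) = (a^2*b^2*a^3*b^2*a^2) := by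
            have h5 : (b^2*(a^2*b*a*b*a^2)*b)⁻¹ * ((a^2*b*a*b*a^2)⁻¹ * (b^2*(a^2*b*a*b*a^2)*b)) = (b^2*(a^2*b*a*b*a^2)*b)⁻¹ * ((b^2*(a^2*b*a*b*a^2)*b) * (a^2*b*a*b*a^2)⁻¹) := by rw [hd2ie]
            simp only [Nat.reduceMul, Nat.reduceAdd, Nat.reduceSub, pa2, pa3, pa5, pb2, pb4, pow_one, mul_inv_rev, inv_inv, hainv, hbinv, mul_assoc, one_mul, mul_one, ha4x, hb3x, ha1, hb1] at h5 ⊢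
            exact h5
          have h6 : (b*a^2*b) * ((b^2*(a^2*b^2*a^3*b^2*a^2)*b) * ((a^2*b^2*a^3*b^2*a^2) * (b^2*(a^2*b*a*b*a^2)*b))) * (b^2*a^2*b^2)
              = (b*a^2*b) * (a^2*b^2*a^3*b^2*a^2) * (b^2*a^2*b^2) := by rw [key]
          simp only [Nat.reduceMul, Nat.reduceAdd, Nat.reduceSub, pa2, pa3, pa5, pb2, pb4, pow_one, mul_inv_rev, inv_inv, hainv, hbinv, mul_assoc, one_mul, mul_one, ha4x, hb3x, ha1, hb1] at h6 ⊢
          exact h6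
    · rcases hε₂ with rfl | rfl
      · rcases hε₃ with rfl | rfl
        · have key : (b*(a^2*b*a*b*a^2)*b^2) * ((a^2*b*a*b*a^2) * (b*(a^2*b^2*a^3*b^2*a^2)*b^2)) = (a^2*b*a*b*a^2) := by
            have h5 : ((a^2*b*a*b*a^2) * (b*(a^2*b*a*b*a^2)*b^2)) * (b*(a^2*b*a*b*a^2)*b^2)⁻¹ = ((b*(a^2*b*a*b*a^2)*b^2) * (a^2*b*a*b*a^2)) * (b*(a^2*b*a*b*a^2)*b^2)⁻¹ := by rw [hde]
            simp only [Nat.reduceMul, Nat.reduceAdd, Nat.reduceSub, pa2, pa3, pa5, pb2, pb4, pow_one, mul_inv_rev, inv_inv, hainv, hbinv, mul_assoc, one_mul, mul_one, ha4x, hb3x, ha1, hb1] at h5 ⊢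
            exact h5.symm
          have h6 : (b^2*a^2*b^2) * ((b*(a^2*b*a*b*a^2)*b^2) * ((a^2*b*a*b*a^2) * (b*(a^2*b^2*a^3*b^2*a^2)*b^2))) * (b*a^2*b)
              = (b^2*a^2*b^2) * (a^2*b*a*b*a^2) * (b*a^2*b) := by rw [key]
          simp only [Nat.reduceMul, Nat.reduceAdd, Nat.reduceSub, pa2, pa3, pa5, pb2, pb4, pow_one, mul_inv_rev, inv_inv, hainv, hbinv, mul_assoc, one_mul, mul_one, ha4x, hb3x, ha1, hb1] at h6 ⊢
          exact h6
        · have key : (b*(a^2*b*a*b*a^2)*b^2) * ((a^2*b^2*a^3*b^2*a^2) * (b*(a^2*b^2*a^3*b^2*a^2)*b^2)) = (a^2*b^2*a^3*b^2*a^2) := by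
            have h5 : ((a^2*b*a*b*a^2)⁻¹ * (b*(a^2*b*a*b*a^2)*b^2)) * (b*(a^2*b*a*b*a^2)*b^2)⁻¹ = ((b*(a^2*b*a*b*a^2)*b^2) * (a^2*b*a*b*a^2)⁻¹) * (b*(a^2*b*a*b*a^2)*b^2)⁻¹ := by rw [hdie]
            simp only [Nat.reduceMul, Nat.reduceAdd, Nat.reduceSub, pa2, pa3, pa5, pb2, pb4, pow_one, mul_inv_rev, inv_inv, hainv, hbinv, mul_assoc, one_mul, mul_one, ha4x, hb3x, ha1, hb1] at h5 ⊢
            exact h5.symm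
          have h6 : (b^2*a^2*b^2) * ((b*(a^2*b*a*b*a^2)*b^2) * ((a^2*b^2*a^3*b^2*a^2) * (b*(a^2*b^2*a^3*b^2*a^2)*b^2))) * (b*a^2*b)
              = (b^2*a^2*b^2) * (a^2*b^2*a^3*b^2*a^2) * (b*a^2*b) := by rw [key]
          simp only [Nat.reduceMul, Nat.reduceAdd, Nat.reduceSub, pa2, pa3, pa5, pb2, pb4, pow_one, mul_inv_rev, inv_inv, hainv, hbinv, mul_assoc, one_mul, mul_one, ha4x, hb3x, ha1, hb1] at h6 ⊢
          exact h6
      · rcases hε₃ with rfl | rfl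
        · have key : (b^2*(a^2*b*a*b*a^2)*b) * ((a^2*b*a*b*a^2) * (b^2*(a^2*b^2*a^3*b^2*a^2)*b)) = (a^2*b*a*b*a^2) := by
            have h5 : ((a^2*b*a*b*a^2) * (b^2*(a^2*b*a*b*a^2)*b)) * (b^2*(a^2*b*a*b*a^2)*b)⁻¹ = ((b^2*(a^2*b*a*b*a^2)*b) * (a^2*b*a*b*a^2)) * (b^2*(a^2*b*a*b*a^2)*b)⁻¹ := by rw [hd2e]
            simp only [Nat.reduceMul, Nat.reduceAdd, Nat.reduceSub, pa2, pa3, pa5, pb2, pb4, pow_one, mul_inv_rev, inv_inv, hainv, hbinv, mul_assoc, one_mul, mul_one, ha4x, hb3x, ha1, hb1] at h5 ⊢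
            exact h5.symm
          have h6 : (b^2*a^2*b) * ((b^2*(a^2*b*a*b*a^2)*b) * ((a^2*b*a*b*a^2) * (b^2*(a^2*b^2*a^3*b^2*a^2)*b))) * (b^2*a^2*b)
              = (b^2*a^2*b) * (a^2*b*a*b*a^2) * (b^2*a^2*b) := by rw [key]
          simp only [Nat.reduceMul, Nat.reduceAdd, Nat.reduceSub, pa2, pa3, pa5, pb2, pb4, pow_one, mul_inv_rev, inv_inv, hainv, hbinv, mul_assoc, one_mul, mul_one, ha4x, hb3x, ha1, hb1] at h6 ⊢
          exact h6
        · have key : (b^2*(a^2*b*a*b*a^2)*b) * ((a^2*b^2*a^3*b^2*a^2) * (b^2*(a^2*b^2*a^3*b^2*a^2)*b)) = (a^2*b^2*a^3*b^2*a^2) := by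
            have h5 : ((a^2*b*a*b*a^2)⁻¹ * (b^2*(a^2*b*a*b*a^2)*b)) * (b^2*(a^2*b*a*b*a^2)*b)⁻¹ = ((b^2*(a^2*b*a*b*a^2)*b) * (a^2*b*a*b*a^2)⁻¹) * (b^2*(a^2*b*a*b*a^2)*b)⁻¹ := by rw [hd2ie]
            simp only [Nat.reduceMul, Nat.reduceAdd, Nat.reduceSub, pa2, pa3, pa5, pb2, pb4, pow_one, mul_inv_rev, inv_inv, hainv, hbinv, mul_assoc, one_mul, mul_one, ha4x, hb3x, ha1, hb1] at h5 ⊢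
            exact h5.symm
          have h6 : (b^2*a^2*b) * ((b^2*(a^2*b*a*b*a^2)*b) * ((a^2*b^2*a^3*b^2*a^2) * (b^2*(a^2*b^2*a^3*b^2*a^2)*b))) * (b^2*a^2*b)
              = (b^2*a^2*b) * (a^2*b^2*a^3*b^2*a^2) * (b^2*a^2*b) := by rw [key]
          simp only [Nat.reduceMul, Nat.reduceAdd, Nat.reduceSub, pa2, pa3, pa5, pb2, pb4, pow_one, mul_inv_rev, inv_inv, hainv, hbinv, mul_assoc, one_mul, mul_one, ha4x, hb3x, ha1, hb1] at h6 ⊢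
          exact h6
  · intro hFE
    have h := hFE 1 (Or.inl rfl) 1 (Or.inl rfl) 1 (Or.inl rfl) _ _ rfl rfl
    rw [commutatorElement_eq_one_iff_commute]
    have h5 := congrArg (fun x => (b*a^2*b*a) * x * (b*a^2*b^2)) h
    show (a^2*b*a*b*a^2) * (b*(a^2*b*a*b*a^2)*b^2) = (b*(a^2*b*a*b*a^2)*b^2) * (a^2*b*a*b*a^2)
    simp only [Nat.reduceMul, Nat.reduceAdd, Nat.reduceSub, pa2, pa3, pa5, pb2, pb4, pow_one, mul_inv_rev, inv_inv, hainv, hbinv, mul_assoc, one_mul, mul_one, ha4x, hb3x, ha1, hb1] at h5 ⊢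
    exact h5
end
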